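/- Let D be a positive integer with decimal expansion D = Σ_{i=0}^n a_i·10^i (a_n ≠ 0) such that D > rev(D) and E = D − rev(D) has the same number of decimal digits as D, and let F = E + rev(E) be the Papadakis–Webster integer produced by D. Then F is divisible by 99, and every decimal digit of the quotient F/99 is 0 or 1. -/

import Mathlib

/-- Digital reversal of a natural number (in base 10). -/
def rev (D : ℕ) : ℕ := Nat.ofDigits 10 ((Nat.digits 10 D).reverse)

lemma ofDigits_div_pow_mod (L : List ℕ) (h : ∀ l ∈ L, l < 10) (i : ℕ) :
    Nat.ofDigits 10 L / 10 ^ i % 10 = L.getD i 0 := by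
  induction L generalizing i with
  | nil => simp [Nat.ofDigits]
  | cons hd tl ih =>
    have hhd : hd < 10 := h hd (by simp)
    cases i with
    | zero =>
      simp [Nat.ofDigits_cons, Nat.add_mul_mod_self_left, Nat.mod_eq_of_lt hhd]
    | succ i =>
      have hdiv : Nat.ofDigits 10 (hd :: tl) / 10 = Nat.ofDigits 10 tl := by
        rw [Nat.ofDigits_cons]
        omega
      rw [pow_succ', ← Nat.div_div_eq_div_mul, hdiv, ih (fun l hl => h l (by simp [hl]))]
      simp

lemma ofDigits_eq_sum (L : List ℕ) :
    Nat.ofDigits 10 L = ∑ i ∈ Finset.range L.length, L.getD i 0 * 10 ^ i := by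
  induction L with
  | nil => simp [Nat.ofDigits]
  | cons hd tl ih =>
    rw [Nat.ofDigits_cons, List.length_cons, Finset.sum_range_succ']
    simp only [List.getD_cons_succ, List.getD_cons_zero, pow_zero, mul_one]
    rw [ih, Finset.mul_sum, add_comm]
    congr 1
    refine Finset.sum_congr rfl fun i _ => ?_
    ring

lemma sub_mod_cases (x y M : ℕ) (hx : x < M) (hy : y < M) :
    ((x : ℤ) - y) % M = (x : ℤ) - y + M * (if x < y then 1 else 0) := by
  by_cases h : x < y
  · rw [if_pos h]
    have h1 : ((x : ℤ) - y) % M = ((x : ℤ) - y + M * 1) % M :=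
      (Int.add_mul_emod_self_left _ _ _).symm
    rw [h1, Int.emod_eq_of_lt (by omega) (by omega)]
  · rw [if_neg h]
    rw [Int.emod_eq_of_lt (by omega) (by omega)]
    ring

/-- If `D > rev D` and `E = D - rev D` has the same number of decimal
digits as `D`, then the Papadakis–Webster integer `F = E + rev E` is divisible by 99,
and every decimal digit of `F / 99` is 0 or 1. -/
theorem stmt1 (D : ℕ) (hpos : 0 < D) (hlt : rev D < D)
    (hlen : (Nat.digits 10 (D - rev D)).length = (Nat.digits 10 D).length) :
    99 ∣ ((D - rev D) + rev (D - rev D)) ∧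
      ∀ d ∈ Nat.digits 10 (((D - rev D) + rev (D - rev D)) / 99), d = 0 ∨ d = 1 := by
  set R := rev D with hRdef
  set E := D - R with hEdef
  set k := (Nat.digits 10 D).length with hkdef
  obtain ⟨n, hn⟩ : ∃ n, k = n + 1 := by
    have h : Nat.digits 10 D ≠ [] := Nat.digits_ne_nil_iff_ne_zero.mpr hpos.ne'
    have hk1 : 0 < k := by rw [hkdef]; exact List.length_pos_iff.mpr h
    exact ⟨k - 1, by omega⟩
  have hkpos : 0 < k := by omega
  have hDlt : D < 10 ^ k := Nat.lt_base_pow_length_digits (by norm_num)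
  have hRleD : R ≤ D := hlt.le
  -- digit functions
  set a : ℕ → ℕ := fun i => D / 10 ^ i % 10 with hadef
  set e : ℕ → ℕ := fun i => E / 10 ^ i % 10 with hedef
  set c : ℕ → ℕ := fun j => if D % 10 ^ j < R % 10 ^ j then 1 else 0 with hcdef
  have hclem : ∀ j, c j = 0 ∨ c j = 1 := by
    intro j; simp only [hcdef]; split <;> simp
  have hdigD : ∀ l ∈ Nat.digits 10 D, l < 10 := fun l hl => Nat.digits_lt_base (by norm_num) hl
  have hdigE : ∀ l ∈ Nat.digits 10 E, l < 10 := fun l hl => Nat.digits_lt_base (by norm_num) hl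
  have hdigDr : ∀ l ∈ (Nat.digits 10 D).reverse, l < 10 := by
    intro l hl; exact hdigD l (List.mem_reverse.mp hl)
  have hdigEr : ∀ l ∈ (Nat.digits 10 E).reverse, l < 10 := by
    intro l hl; exact hdigE l (List.mem_reverse.mp hl)
  -- a i is the i-th digit of D
  have haL : ∀ i, a i = (Nat.digits 10 D).getD i 0 := by
    intro i
    have := ofDigits_div_pow_mod (Nat.digits 10 D) hdigD i
    rwa [Nat.ofDigits_digits] at this
  have heL : ∀ i, e i = (Nat.digits 10 E).getD i 0 := by
    intro i
    have := ofDigits_div_pow_mod (Nat.digits 10 E) hdigE i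
    rwa [Nat.ofDigits_digits] at this
  -- R's digits
  have hrevgetD : ∀ (L : List ℕ) i, i < L.length →
      L.reverse.getD i 0 = L.getD (L.length - 1 - i) 0 := by
    intro L i hi
    rw [List.getD_eq_getElem L.reverse 0 (by simpa using hi),
        List.getD_eq_getElem L 0 (by omega), List.getElem_reverse]
  have hRdig : ∀ i, i < k → R / 10 ^ i % 10 = a (n - i) := by
    intro i hi
    have h1 := ofDigits_div_pow_mod ((Nat.digits 10 D).reverse) hdigDr i
    rw [hRdef, rev, h1, hrevgetD _ i (by simpa [hkdef] using hi), haL]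
    congr 1
    omega
  -- value of R as a sum
  have hRval : R = ∑ i ∈ Finset.range k, a (n - i) * 10 ^ i := by
    rw [hRdef, rev, ofDigits_eq_sum]
    rw [List.length_reverse, ← hkdef]
    refine Finset.sum_congr rfl fun i hi => ?_
    rw [Finset.mem_range] at hi
    rw [hrevgetD _ i (by simpa [hkdef] using hi), ← haL]
    congr 2
    omega
  have hRlt : R < 10 ^ k := lt_of_le_of_lt hRleD hDlt
  -- value of E and rev E as sums
  have hlenE : (Nat.digits 10 E).length = k := hlen
  have hEval : E = ∑ i ∈ Finset.range k, e i * 10 ^ i := by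
    conv_lhs => rw [← Nat.ofDigits_digits 10 E]
    rw [ofDigits_eq_sum, hlenE]
    exact Finset.sum_congr rfl fun i _ => by rw [← heL]
  have hrevE : rev E = ∑ i ∈ Finset.range k, e i * 10 ^ (n - i) := by
    rw [rev, ofDigits_eq_sum, List.length_reverse, hlenE]
    have h1 : ∀ i ∈ Finset.range k, (Nat.digits 10 E).reverse.getD i 0 * 10 ^ i
        = e (n - i) * 10 ^ (n - (n - i)) := by
      intro i hi
      rw [Finset.mem_range] at hi
      rw [hrevgetD _ i (by omega), hlenE, ← heL]
      congr 2 <;> omega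
    rw [Finset.sum_congr rfl h1]
    have h2 := Finset.sum_range_reflect (fun i => e i * 10 ^ (n - i)) k
    simp only [hn, Nat.add_sub_cancel] at h2 ⊢
    exact h2
  -- borrow bit facts
  have hc0 : c 0 = 0 := by simp [hcdef, Nat.mod_one]
  have hck : c k = 0 := by
    simp only [hcdef, Nat.mod_eq_of_lt hDlt, Nat.mod_eq_of_lt hRlt]
    rw [if_neg (by omega)]
  -- the key congruence for E mod 10^j
  have hEZ : (E : ℤ) = (D : ℤ) - R := by
    rw [hEdef]; push_cast [Nat.cast_sub hRleD]; ring
  have hEmod : ∀ j : ℕ, (E : ℤ) % 10 ^ j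
      = (D : ℤ) % 10 ^ j - (R : ℤ) % 10 ^ j + 10 ^ j * (c j : ℤ) := by
    intro j
    have hDm : (D : ℤ) % 10 ^ j = ((D % 10 ^ j : ℕ) : ℤ) := by push_cast; ring
    have hRm : (R : ℤ) % 10 ^ j = ((R % 10 ^ j : ℕ) : ℤ) := by push_cast; ring
    have hMlt1 : D % 10 ^ j < 10 ^ j := Nat.mod_lt _ (by positivity)
    have hMlt2 : R % 10 ^ j < 10 ^ j := Nat.mod_lt _ (by positivity)
    have key := sub_mod_cases (D % 10 ^ j) (R % 10 ^ j) (10 ^ j) hMlt1 hMlt2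
    rw [hEZ, Int.sub_emod, hDm, hRm]
    push_cast at key ⊢
    rw [key]
    simp only [hcdef]
    split <;> simp
  -- digit relation
  have hed : ∀ i, i < k → (e i : ℤ) = (a i : ℤ) - a (n - i) + 10 * c (i + 1) - c i := by
    intro i hi
    have hE1 : ((E : ℤ)) % 10 ^ (i + 1) = (E : ℤ) % 10 ^ i + 10 ^ i * (e i : ℤ) := by
      have h := congrArg (fun t : ℕ => (t : ℤ)) (Nat.mod_pow_succ (x := E) (b := 10) (k := i))
      push_cast at h
      simpa [hedef] using h
    have hD1 : ((D : ℤ)) % 10 ^ (i + 1) = (D : ℤ) % 10 ^ i + 10 ^ i * (a i : ℤ) := by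
      have h := congrArg (fun t : ℕ => (t : ℤ)) (Nat.mod_pow_succ (x := D) (b := 10) (k := i))
      push_cast at h
      simpa [hadef] using h
    have hR1 : ((R : ℤ)) % 10 ^ (i + 1) = (R : ℤ) % 10 ^ i + 10 ^ i * (a (n - i) : ℤ) := by
      have h := congrArg (fun t : ℕ => (t : ℤ)) (Nat.mod_pow_succ (x := R) (b := 10) (k := i))
      rw [hRdig i hi] at h
      push_cast at h
      exact h
    have h1 := hEmod i
    have h2 := hEmod (i + 1)
    rw [hE1, hD1, hR1, h1] at h2
    have h3 : (10 : ℤ) ^ i * (e i : ℤ)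
        = 10 ^ i * ((a i : ℤ) - a (n - i) + 10 * c (i + 1) - c i) := by
      have hps : (10 : ℤ) ^ (i + 1) = 10 ^ i * 10 := pow_succ 10 i
      rw [hps] at h2
      ring_nf at h2 ⊢
      linarith
    exact mul_left_cancel₀ (pow_ne_zero i (by norm_num)) h3
  -- the natural number quotient
  set Qn : ℕ := ∑ i ∈ Finset.range k, c i * 10 ^ (n - i) with hQn
  -- main identity in ℤ
  have hmain : ((E + rev E : ℕ) : ℤ) = 99 * (Qn : ℤ) := by
    have h1 : (E : ℤ) = ∑ i ∈ Finset.range k, (e i : ℤ) * 10 ^ i := by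
      conv_lhs => rw [hEval]
      push_cast
      rfl
    have h2 : ((rev E : ℕ) : ℤ) = ∑ i ∈ Finset.range k, (e i : ℤ) * 10 ^ (n - i) := by
      conv_lhs => rw [hrevE]
      push_cast
      rfl
    have hcast : ((E + rev E : ℕ) : ℤ)
        = ∑ i ∈ Finset.range k, (e i : ℤ) * (10 ^ i + 10 ^ (n - i)) := by
      push_cast
      rw [h1, h2, ← Finset.sum_add_distrib]
      refine Finset.sum_congr rfl fun i _ => ?_
      ring
    rw [hcast]
    have hterm : ∀ i ∈ Finset.range k,
        (e i : ℤ) * (10 ^ i + 10 ^ (n - i))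
          = ((a i : ℤ) - a (n - i)) * (10 ^ i + 10 ^ (n - i))
            + (10 * (c (i + 1) : ℤ) - c i) * 10 ^ i
            + (10 * (c (i + 1) : ℤ) - c i) * 10 ^ (n - i) := by
      intro i hi
      rw [Finset.mem_range] at hi
      rw [hed i hi]
      ring
    rw [Finset.sum_congr rfl hterm, Finset.sum_add_distrib, Finset.sum_add_distrib]
    -- S1 = 0
    have hS1 : ∑ i ∈ Finset.range k,
        ((a i : ℤ) - a (n - i)) * (10 ^ i + 10 ^ (n - i)) = 0 := by
      set f : ℕ → ℤ := fun i => ((a i : ℤ) - a (n - i)) * (10 ^ i + 10 ^ (n - i)) with hf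
      have h2 : ∑ j ∈ Finset.range k, f j = ∑ j ∈ Finset.range k, -(f j) := by
        conv_lhs => rw [← Finset.sum_range_reflect]
        refine Finset.sum_congr rfl fun j hj => ?_
        rw [Finset.mem_range] at hj
        simp only [hf]
        rw [show k - 1 - j = n - j from by omega, show n - (n - j) = j from by omega]
        ring
      have h3 : ∑ j ∈ Finset.range k, -(f j) = -∑ j ∈ Finset.range k, f j :=
        Finset.sum_neg_distrib f
      rw [h3] at h2
      linarith
    -- S2 = 0
    have hS2 : ∑ i ∈ Finset.range k,
        (10 * (c (i + 1) : ℤ) - c i) * 10 ^ i = 0 := by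
      have hterm2 : ∀ i ∈ Finset.range k,
          (10 * (c (i + 1) : ℤ) - c i) * 10 ^ i
            = 10 ^ (i + 1) * (c (i + 1) : ℤ) - 10 ^ i * (c i : ℤ) := by
        intro i _
        rw [pow_succ]
        ring
      rw [Finset.sum_congr rfl hterm2,
        Finset.sum_range_sub (fun j => (10 : ℤ) ^ j * (c j : ℤ)) k]
      simp [hck, hc0]
    -- S3 = 99 * Qn
    have hS3 : ∑ i ∈ Finset.range k,
        (10 * (c (i + 1) : ℤ) - c i) * 10 ^ (n - i) = 99 * (Qn : ℤ) := by
      have hsplit : ∑ i ∈ Finset.range k,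
          (10 * (c (i + 1) : ℤ) - c i) * 10 ^ (n - i)
            = (∑ i ∈ Finset.range k, 10 * (c (i + 1) : ℤ) * 10 ^ (n - i))
              - ∑ i ∈ Finset.range k, (c i : ℤ) * 10 ^ (n - i) := by
        rw [← Finset.sum_sub_distrib]
        refine Finset.sum_congr rfl fun i _ => ?_
        ring
      have hQz : (Qn : ℤ) = ∑ i ∈ Finset.range k, (c i : ℤ) * 10 ^ (n - i) := by
        rw [hQn]
        push_cast
        rfl
      have hQz' : ∑ i ∈ Finset.range n, (c (i + 1) : ℤ) * 10 ^ (n - (i + 1)) = (Qn : ℤ) := by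
        rw [hQz, hn, Finset.sum_range_succ']
        simp [hc0]
      have hS3a : ∑ i ∈ Finset.range k, 10 * (c (i + 1) : ℤ) * 10 ^ (n - i)
          = 100 * (Qn : ℤ) := by
        rw [hn, Finset.sum_range_succ]
        have hcn1 : c (n + 1) = 0 := by rw [← hn]; exact hck
        rw [hcn1]
        have hterm3 : ∀ i ∈ Finset.range n,
            10 * (c (i + 1) : ℤ) * 10 ^ (n - i)
              = 100 * ((c (i + 1) : ℤ) * 10 ^ (n - (i + 1))) := by
          intro i hi
          rw [Finset.mem_range] at hi
          rw [show n - i = (n - (i + 1)) + 1 from by omega, pow_succ]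
          ring
        rw [Finset.sum_congr rfl hterm3, ← Finset.mul_sum, hQz']
        push_cast
        ring
      rw [hsplit, hS3a, ← hQz]
      ring
    rw [hS1, hS2, hS3]
    ring
  -- transfer to ℕ
  have hFnat : E + rev E = 99 * Qn := by
    have := hmain
    exact_mod_cast this
  constructor
  · exact ⟨Qn, hFnat⟩
  · intro d hd
    rw [hFnat, Nat.mul_div_cancel_left _ (by norm_num : 0 < 99)] at hd
    -- Qn = ofDigits of the list of borrow bits
    set Lc : List ℕ := (List.range k).map (fun i => c (n - i)) with hLc
    have hLclen : Lc.length = k := by simp [hLc]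
    have hLcget : ∀ i, i < k → Lc.getD i 0 = c (n - i) := by
      intro i hi
      rw [List.getD_eq_getElem Lc 0 (by omega)]
      simp [hLc]
    have hLclt : ∀ l ∈ Lc, l < 10 := by
      intro l hl
      simp only [hLc, List.mem_map] at hl
      obtain ⟨i, _, rfl⟩ := hl
      rcases hclem (n - i) with h | h <;> omega
    have hQnof : Qn = Nat.ofDigits 10 Lc := by
      rw [ofDigits_eq_sum, hLclen, hQn]
      have h1 : ∀ i ∈ Finset.range k, Lc.getD i 0 * 10 ^ i = c (n - i) * 10 ^ (n - (n - i)) := by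
        intro i hi
        rw [Finset.mem_range] at hi
        rw [hLcget i hi]
        congr 2
        omega
      rw [Finset.sum_congr rfl h1]
      have h2 := Finset.sum_range_reflect (fun i => c i * 10 ^ (n - i)) k
      simp only [hn, Nat.add_sub_cancel] at h2 ⊢
      exact h2.symm
    -- extract the digit
    obtain ⟨i, hi, rfl⟩ := List.mem_iff_getElem.mp hd
    have hdig : (Nat.digits 10 Qn)[i] = Qn / 10 ^ i % 10 := by
      have h := ofDigits_div_pow_mod (Nat.digits 10 Qn)
        (fun l hl => Nat.digits_lt_base (by norm_num) hl) i
      rw [Nat.ofDigits_digits] at h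
      rw [← List.getD_eq_getElem (Nat.digits 10 Qn) 0 hi, h]
    rw [hdig]
    have h := ofDigits_div_pow_mod Lc hLclt i
    rw [← hQnof] at h
    rw [h]
    by_cases hik : i < k
    · rw [hLcget i hik]
      rcases hclem (n - i) with h0 | h0 <;> [left; right] <;> exact h0
    · rw [List.getD_eq_default Lc 0 (by omega)]
      left
      rfl
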